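/- Let H be a real inner product space of finite dimension n ≥ 1, let N ≥ 2, let K be a bounded linear operator on H, and let G = (g_1,…,g_N) be a 2-uniform K-dual of F = (f_1,…,f_N), i.e., ⟨f_i, g_i⟩ = tr(K)/N for all i and ⟨f_i, g_j⟩⟨f_j, g_i⟩ is a constant c for all i ≠ j. Then: (a) every K-dual G' = (g'_1,…,g'_N) of F satisfies max_{1≤i≤N} |⟨f_i, g'_i⟩| ≥ |tr(K)|/N = max_{1≤i≤N} |⟨f_i, g_i⟩|; and (b) every K-dual G' of F with ⟨f_i, g'_i⟩ = tr(K)/N for all i satisfies max_{i≠j} e_{ij}(F,G) ≤ max_{i≠j} e_{ij}(F,G'). -/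

import Mathlib

local notation "⟪" x ", " y "⟫" => @inner ℝ _ _ x y

noncomputable def eErr (t c : ℝ) : ℝ :=
  if 0 ≤ c then |t| + Real.sqrt c else Real.sqrt (t ^ 2 - c)

lemma eErr_mono_nonneg (t : ℝ) {c c' : ℝ} (hc : 0 ≤ c) (h : c ≤ c') :
    eErr t c ≤ eErr t c' := by
  rw [eErr, eErr, if_pos hc, if_pos (hc.trans h)]
  exact add_le_add le_rfl (Real.sqrt_le_sqrt h)

lemma eErr_anti_neg (t : ℝ) {c c' : ℝ} (hc : c < 0) (h : c' ≤ c) :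
    eErr t c ≤ eErr t c' := by
  rw [eErr, eErr, if_neg (not_le.mpr hc), if_neg (not_le.mpr (h.trans_lt hc))]
  exact Real.sqrt_le_sqrt (by linarith)

lemma trace_eq_sum_dual {H : Type*} [NormedAddCommGroup H] [InnerProductSpace ℝ H]
    [FiniteDimensional ℝ H]
    {N : ℕ} (K : H →L[ℝ] H) (F G' : Fin N → H)
    (hdual : ∀ f : H, K f = ∑ i, ⟪G' i, f⟫ • F i) :
    LinearMap.trace ℝ H (K : H →ₗ[ℝ] H) = ∑ i, ⟪G' i, F i⟫ := by
  let b := stdOrthonormalBasis ℝ H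
  rw [LinearMap.trace_eq_matrix_trace ℝ b.toBasis]
  rw [Matrix.trace]
  have : ∀ j, (LinearMap.toMatrix b.toBasis b.toBasis (K : H →ₗ[ℝ] H)).diag j
      = ∑ i, ⟪G' i, b j⟫ * ⟪b j, F i⟫ := by
    intro j
    rw [Matrix.diag, LinearMap.toMatrix_apply, b.coe_toBasis, b.coe_toBasis_repr_apply,
      b.repr_apply_apply]
    simp only [ContinuousLinearMap.coe_coe, hdual (b j), inner_sum, real_inner_smul_right]
  rw [Finset.sum_congr rfl fun j _ => this j, Finset.sum_comm]
  congr 1; ext i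
  rw [← b.sum_inner_mul_inner (G' i) (F i)]

lemma sum_sq_dual_eq {H : Type*} [NormedAddCommGroup H] [InnerProductSpace ℝ H]
    {N : ℕ} (K : H →L[ℝ] H) (F G G' : Fin N → H)
    (hdual : ∀ f : H, K f = ∑ i, ⟪G i, f⟫ • F i)
    (hdual' : ∀ f : H, K f = ∑ i, ⟪G' i, f⟫ • F i) :
    ∑ j, ∑ i, ⟪G i, F j⟫ * ⟪G j, F i⟫ = ∑ j, ∑ i, ⟪G' i, F j⟫ * ⟪G' j, F i⟫ := by
  have h1 : ∀ (A : Fin N → H), (∀ f : H, K f = ∑ i, ⟪A i, f⟫ • F i) →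
      ∀ (B : Fin N → H), ∑ j, ∑ i, ⟪A i, F j⟫ * ⟪B j, F i⟫ = ∑ j, ⟪B j, K (F j)⟫ := by
    intro A hA B
    congr 1; ext j
    rw [hA (F j), inner_sum]
    congr 1; ext i
    rw [real_inner_smul_right]
  calc ∑ j, ∑ i, ⟪G i, F j⟫ * ⟪G j, F i⟫
      = ∑ j, ⟪G j, K (F j)⟫ := h1 G hdual G
    _ = ∑ j, ∑ i, ⟪G' i, F j⟫ * ⟪G j, F i⟫ := (h1 G' hdual' G).symm
    _ = ∑ j, ∑ i, ⟪G' j, F i⟫ * ⟪G i, F j⟫ := Finset.sum_comm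
    _ = ∑ j, ∑ i, ⟪G i, F j⟫ * ⟪G' j, F i⟫ :=
        Finset.sum_congr rfl fun j _ => Finset.sum_congr rfl fun i _ => mul_comm _ _
    _ = ∑ j, ⟪G' j, K (F j)⟫ := h1 G hdual G'
    _ = ∑ j, ∑ i, ⟪G' i, F j⟫ * ⟪G' j, F i⟫ := (h1 G' hdual' G').symm

/-- real Hilbert space, `N ≥ 2`, `K` a bounded operator, `G` a 2-uniform
`K`-dual of `F` (`⟨f_i, g_i⟩ = tr(K)/N` for all `i` and `⟨f_i, g_j⟩⟨f_j, g_i⟩ = c` for all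
`i ≠ j`).  Then: (a) every `K`-dual `G'` of `F` satisfies
`max_i |⟨f_i, g'_i⟩| ≥ |tr(K)|/N = max_i |⟨f_i, g_i⟩|`; and (b) every `K`-dual `G'` of `F`
with `⟨f_i, g'_i⟩ = tr(K)/N` for all `i` satisfies
`max_{i≠j} e_{ij}(F,G) ≤ max_{i≠j} e_{ij}(F,G')`. -/
theorem stmt19
    {H : Type*} [NormedAddCommGroup H] [InnerProductSpace ℝ H] [FiniteDimensional ℝ H]
    (hdim : 1 ≤ Module.finrank ℝ H)
    {N : ℕ} (hN : 2 ≤ N)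
    (K : H →L[ℝ] H)
    (F G : Fin N → H)
    (hdual : ∀ f : H, K f = ∑ i, ⟪G i, f⟫ • F i)
    (huni1 : ∀ i, ⟪G i, F i⟫ = LinearMap.trace ℝ H (K : H →ₗ[ℝ] H) / N)
    (c : ℝ)
    (huni2 : ∀ i j, i ≠ j → ⟪G i, F j⟫ * ⟪G j, F i⟫ = c) :
    ((⨆ i, |⟪G i, F i⟫|) = |LinearMap.trace ℝ H (K : H →ₗ[ℝ] H)| / N) ∧
    (∀ G' : Fin N → H, (∀ f : H, K f = ∑ i, ⟪G' i, f⟫ • F i) →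
      |LinearMap.trace ℝ H (K : H →ₗ[ℝ] H)| / N ≤ ⨆ i, |⟪G' i, F i⟫|) ∧
    (∀ G' : Fin N → H, (∀ f : H, K f = ∑ i, ⟪G' i, f⟫ • F i) →
      (∀ i, ⟪G' i, F i⟫ = LinearMap.trace ℝ H (K : H →ₗ[ℝ] H) / N) →
      (⨆ p : {p : Fin N × Fin N // p.1 ≠ p.2},
          eErr (LinearMap.trace ℝ H (K : H →ₗ[ℝ] H) / N)
            (⟪G p.1.1, F p.1.2⟫ * ⟪G p.1.2, F p.1.1⟫)) ≤
      (⨆ p : {p : Fin N × Fin N // p.1 ≠ p.2},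
          eErr (LinearMap.trace ℝ H (K : H →ₗ[ℝ] H) / N)
            (⟪G' p.1.1, F p.1.2⟫ * ⟪G' p.1.2, F p.1.1⟫))) := by
  have hN0 : 0 < N := by omega
  have hNR : (0 : ℝ) < N := by exact_mod_cast hN0
  haveI : Nonempty (Fin N) := ⟨⟨0, hN0⟩⟩
  set τ : ℝ := LinearMap.trace ℝ H (K : H →ₗ[ℝ] H) with hτ
  set t : ℝ := τ / N with ht
  have habs : |t| = |τ| / N := by
    rw [ht, abs_div, abs_of_pos hNR]
  refine ⟨?_, ?_, ?_⟩
  · have : (fun i : Fin N => |⟪G i, F i⟫|) = fun _ => |t| := by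
      funext i; rw [huni1 i]
    rw [this, ciSup_const, habs]
  · intro G' hdual'
    have htr : τ = ∑ i, ⟪G' i, F i⟫ := trace_eq_sum_dual K F G' hdual'
    have hbdd : BddAbove (Set.range fun i : Fin N => |⟪G' i, F i⟫|) :=
      (Set.finite_range _).bddAbove
    have hle : ∀ i, |⟪G' i, F i⟫| ≤ ⨆ i, |⟪G' i, F i⟫| := fun i => le_ciSup hbdd i
    have : |τ| ≤ N * ⨆ i, |⟪G' i, F i⟫| := by
      calc |τ| ≤ ∑ i, |⟪G' i, F i⟫| := htr ▸ Finset.abs_sum_le_sum_abs _ _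
        _ ≤ ∑ _i : Fin N, ⨆ i, |⟪G' i, F i⟫| := Finset.sum_le_sum fun i _ => hle i
        _ = N * ⨆ i, |⟪G' i, F i⟫| := by rw [Finset.sum_const, Finset.card_univ,
              Fintype.card_fin, nsmul_eq_mul]
    rw [div_le_iff₀ hNR]
    linarith
  · intro G' hdual' huni1'
    haveI hPne : Nonempty {p : Fin N × Fin N // p.1 ≠ p.2} :=
      ⟨⟨(⟨0, by omega⟩, ⟨1, by omega⟩), by simp [Fin.ext_iff]⟩⟩
    -- LHS equals eErr t c
    have hL : (⨆ p : {p : Fin N × Fin N // p.1 ≠ p.2},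
        eErr t (⟪G p.1.1, F p.1.2⟫ * ⟪G p.1.2, F p.1.1⟫)) = eErr t c := by
      have : (fun p : {p : Fin N × Fin N // p.1 ≠ p.2} =>
          eErr t (⟪G p.1.1, F p.1.2⟫ * ⟪G p.1.2, F p.1.1⟫)) = fun _ => eErr t c := by
        funext p; rw [huni2 _ _ p.2]
      rw [this, ciSup_const]
    rw [hL]
    -- off-diagonal sums are equal
    have hsum := sum_sq_dual_eq K F G G' hdual hdual'
    set s : Finset (Fin N × Fin N) := Finset.univ.filter (fun p => p.1 ≠ p.2) with hs
    have hsplit : ∀ (A : Fin N → H), (∀ i, ⟪A i, F i⟫ = t) →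
        ∑ j, ∑ i, ⟪A i, F j⟫ * ⟪A j, F i⟫
          = N * t ^ 2 + ∑ p ∈ s, ⟪A p.1, F p.2⟫ * ⟪A p.2, F p.1⟫ := by
      intro A hA
      have h0 : ∑ j, ∑ i, ⟪A i, F j⟫ * ⟪A j, F i⟫
          = ∑ p : Fin N × Fin N, ⟪A p.1, F p.2⟫ * ⟪A p.2, F p.1⟫ := by
        rw [Fintype.sum_prod_type]
        exact Finset.sum_congr rfl fun j _ => Finset.sum_congr rfl fun i _ => mul_comm _ _
      rw [h0,
        ← Finset.sum_filter_add_sum_filter_not Finset.univ (fun p : Fin N × Fin N => p.1 = p.2)]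
      congr 1
      · rw [Finset.sum_filter, Fintype.sum_prod_type]
        have hdiag : ∀ j : Fin N,
            (∑ i, if j = i then ⟪A j, F i⟫ * ⟪A i, F j⟫ else 0) = t ^ 2 := by
          intro j
          rw [Finset.sum_ite_eq Finset.univ j (fun i => ⟪A j, F i⟫ * ⟪A i, F j⟫)]
          simp [hA j, sq]
        rw [Finset.sum_congr rfl fun j _ => hdiag j, Finset.sum_const, Finset.card_univ,
          Fintype.card_fin, nsmul_eq_mul]
    have hG := hsplit G huni1
    have hG' := hsplit G' huni1'
    -- careful: hsplit sums over (j,i) pairs vs formula order; products are symmetric anyway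
    have hoff : ∑ p ∈ s, ⟪G p.1, F p.2⟫ * ⟪G p.2, F p.1⟫
        = ∑ p ∈ s, ⟪G' p.1, F p.2⟫ * ⟪G' p.2, F p.1⟫ := by
      have := hsum
      rw [hG, hG'] at this
      linarith
    have hsne : s.Nonempty := by
      refine ⟨(⟨0, by omega⟩, ⟨1, by omega⟩), ?_⟩
      simp [hs, Fin.ext_iff]
    have hGconst : ∑ p ∈ s, ⟪G p.1, F p.2⟫ * ⟪G p.2, F p.1⟫ = s.card * c := by
      rw [Finset.sum_congr rfl (fun p hp => huni2 p.1 p.2 (by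
        rw [hs] at hp; exact (Finset.mem_filter.mp hp).2))]
      rw [Finset.sum_const, nsmul_eq_mul]
    have hbdd' : BddAbove (Set.range fun p : {p : Fin N × Fin N // p.1 ≠ p.2} =>
        eErr t (⟪G' p.1.1, F p.1.2⟫ * ⟪G' p.1.2, F p.1.1⟫)) :=
      (Set.finite_range _).bddAbove
    rcases le_or_gt 0 c with hc | hc
    · -- find p with c ≤ c'_p
      obtain ⟨p, hp, hpe⟩ := Finset.exists_le_of_sum_le hsne (by
        rw [Finset.sum_const, nsmul_eq_mul, ← hGconst, hoff] :
        ∑ _p ∈ s, c ≤ ∑ p ∈ s, ⟪G' p.1, F p.2⟫ * ⟪G' p.2, F p.1⟫)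
      have hpne : p.1 ≠ p.2 := by rw [hs] at hp; exact (Finset.mem_filter.mp hp).2
      calc eErr t c ≤ eErr t (⟪G' p.1, F p.2⟫ * ⟪G' p.2, F p.1⟫) :=
            eErr_mono_nonneg t hc hpe
        _ ≤ _ := le_ciSup hbdd' ⟨p, hpne⟩
    · -- find p with c'_p ≤ c
      obtain ⟨p, hp, hpe⟩ := Finset.exists_le_of_sum_le hsne (by
        rw [Finset.sum_const, nsmul_eq_mul, ← hGconst, hoff] :
        ∑ p ∈ s, ⟪G' p.1, F p.2⟫ * ⟪G' p.2, F p.1⟫ ≤ ∑ _p ∈ s, c)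
      have hpne : p.1 ≠ p.2 := by rw [hs] at hp; exact (Finset.mem_filter.mp hp).2
      calc eErr t c ≤ eErr t (⟪G' p.1, F p.2⟫ * ⟪G' p.2, F p.1⟫) :=
            eErr_anti_neg t hc hpe
        _ ≤ _ := le_ciSup hbdd' ⟨p, hpne⟩
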